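/- Let n ≥ 3. The stabilizer of a nonzero null vector ℓ in the group SO(n−1,1) = {A ∈ GL(n,ℝ) : AᵀηA = η and det A = 1}, i.e. the subgroup {A ∈ SO(n−1,1) : Aℓ = ℓ}, is isomorphic as a group to the semidirect product ℝ^{n−2} ⋊ SO(n−2), where SO(n−2) = {O ∈ GL(n−2,ℝ) : OᵀO = 1, det O = 1} acts on ℝ^{n−2} by its standard linear action (the Euclidean group ISO(n−2)). -/

import Mathlib

open Matrix RealInnerProductSpace

/-- The Minkowski bilinear form on `ℝⁿ`, given by the diagonal matrix `diag(-1,1,…,1)`. -/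
noncomputable def minkMat (n : ℕ) : Matrix (Fin n) (Fin n) ℝ :=
  Matrix.diagonal (fun i => if (i : ℕ) = 0 then (-1 : ℝ) else 1)

/-- The standard action of an invertible `m × m` matrix on `ℝ^m`, as an additive
automorphism. -/
noncomputable def stdAddAut {m : ℕ} (O : GL (Fin m) ℝ) : AddAut (Fin m → ℝ) where
  toFun v := (O : Matrix (Fin m) (Fin m) ℝ).mulVec v
  invFun v := ((O⁻¹ : GL (Fin m) ℝ) : Matrix (Fin m) (Fin m) ℝ).mulVec v
  left_inv v := by
    show ((O⁻¹ : GL (Fin m) ℝ) : Matrix (Fin m) (Fin m) ℝ) *ᵥ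
        ((O : Matrix (Fin m) (Fin m) ℝ) *ᵥ v) = v
    rw [Matrix.mulVec_mulVec, Units.inv_mul, Matrix.one_mulVec]
  right_inv v := by
    show ((O : GL (Fin m) ℝ) : Matrix (Fin m) (Fin m) ℝ) *ᵥ
        (((O⁻¹ : GL (Fin m) ℝ) : Matrix (Fin m) (Fin m) ℝ) *ᵥ v) = v
    rw [Matrix.mulVec_mulVec, Units.mul_inv, Matrix.one_mulVec]
  map_add' u v := Matrix.mulVec_add _ u v

lemma stdAddAut_mul {m : ℕ} (O O' : GL (Fin m) ℝ) :
    stdAddAut (O * O') = stdAddAut O + stdAddAut O' := by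
  refine AddEquiv.ext fun v => ?_
  show ((O * O' : GL (Fin m) ℝ) : Matrix (Fin m) (Fin m) ℝ) *ᵥ v
      = (O : Matrix (Fin m) (Fin m) ℝ) *ᵥ ((O' : Matrix (Fin m) (Fin m) ℝ) *ᵥ v)
  rw [Matrix.mulVec_mulVec]
  rfl

/-- The standard linear action of a subgroup of `GL(m, ℝ)` on `ℝ^m` (written
multiplicatively), as a homomorphism into the automorphism group; this is the action used
for the semidirect product `ℝ^{n-2} ⋊ SO(n-2)`. -/
noncomputable def stdAction {m : ℕ} (G : Subgroup (GL (Fin m) ℝ)) :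
    G →* MulAut (Multiplicative (Fin m → ℝ)) where
  toFun O := AddEquiv.toMultiplicative (stdAddAut (O : GL (Fin m) ℝ))
  map_one' := by
    refine MulEquiv.ext fun v => ?_
    show (stdAddAut ((1 : G) : GL (Fin m) ℝ)) v.toAdd = v.toAdd
    show ((1 : GL (Fin m) ℝ) : Matrix (Fin m) (Fin m) ℝ) *ᵥ v.toAdd = v.toAdd
    rw [Units.val_one, Matrix.one_mulVec]
  map_mul' O O' := by
    refine MulEquiv.ext fun v => ?_
    show (stdAddAut (((O * O' : G)) : GL (Fin m) ℝ)) v.toAdd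
        = (stdAddAut (O : GL (Fin m) ℝ)) ((stdAddAut (O' : GL (Fin m) ℝ)) v.toAdd)
    rw [show ((O * O' : G) : GL (Fin m) ℝ) = (O : GL (Fin m) ℝ) * (O' : GL (Fin m) ℝ) from rfl,
      stdAddAut_mul]
    rfl


namespace LorentzAux
variable {m : ℕ}

def Kmat : Matrix (Fin 2) (Fin 2) ℝ := Matrix.of fun i j => if i = j then 0 else 1

def Jmat (m : ℕ) : Matrix (Fin 2 ⊕ Fin m) (Fin 2 ⊕ Fin m) ℝ := fromBlocks Kmat 0 0 1

def Amat (a : ℝ) : Matrix (Fin 2) (Fin 2) ℝ :=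
  Matrix.of fun i j => if i = j then 1 else if i = 0 then a else 0

def Bm (c : Fin m → ℝ) : Matrix (Fin 2) (Fin m) ℝ := Matrix.of fun i j => if i = 0 then c j else 0

def Cm (c : Fin m → ℝ) : Matrix (Fin m) (Fin 2) ℝ := Matrix.of fun i j => if j = 1 then -c i else 0

noncomputable def Tm (c : Fin m → ℝ) : Matrix (Fin 2 ⊕ Fin m) (Fin 2 ⊕ Fin m) ℝ :=
  fromBlocks (Amat (-(c ⬝ᵥ c)/2)) (Bm c) (Cm c) 1

def Rm (D : Matrix (Fin m) (Fin m) ℝ) : Matrix (Fin 2 ⊕ Fin m) (Fin 2 ⊕ Fin m) ℝ :=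
  fromBlocks 1 0 0 D

lemma Amat_mul (a b : ℝ) : Amat a * Amat b = Amat (a + b) := by
  ext i j
  fin_cases i <;> fin_cases j <;> simp [Amat, Matrix.mul_apply, Fin.sum_univ_two] <;> ring

lemma Bm_mul_Cm (c c' : Fin m → ℝ) :
    Bm c * Cm c' = Matrix.of fun i j => if i = 0 ∧ j = 1 then -(c ⬝ᵥ c') else 0 := by
  ext i j
  fin_cases i <;> fin_cases j <;>
    simp [Bm, Cm, Matrix.mul_apply, dotProduct, mul_neg, Finset.sum_neg_distrib]

lemma Amat_mul_Bm (a : ℝ) (c : Fin m → ℝ) : Amat a * Bm c = Bm c := by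
  ext i j
  fin_cases i <;> simp [Amat, Bm, Matrix.mul_apply, Fin.sum_univ_two]

lemma Cm_mul_Amat (c : Fin m → ℝ) (a : ℝ) : Cm c * Amat a = Cm c := by
  ext i j
  fin_cases j <;> simp [Amat, Cm, Matrix.mul_apply, Fin.sum_univ_two]

lemma Cm_mul_Bm (c c' : Fin m → ℝ) : Cm c * Bm c' = 0 := by
  ext i j
  simp [Cm, Bm, Matrix.mul_apply, Fin.sum_univ_two]

lemma Tm_mul (c c' : Fin m → ℝ) : Tm c * Tm c' = Tm (c + c') := by
  unfold Tm
  rw [fromBlocks_multiply]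
  simp only [Matrix.mul_one, Matrix.one_mul, Amat_mul, Bm_mul_Cm, Amat_mul_Bm, Cm_mul_Amat,
    Cm_mul_Bm, zero_add]
  have h11 : Amat (-(c ⬝ᵥ c)/2 + -(c' ⬝ᵥ c')/2)
        + (Matrix.of fun i j => if i = 0 ∧ j = 1 then -(c ⬝ᵥ c') else 0)
      = Amat (-((c + c') ⬝ᵥ (c + c'))/2) := by
    ext i j
    fin_cases i <;> fin_cases j <;>
      simp [Amat, add_dotProduct, dotProduct_add, dotProduct_comm c' c] <;> ring
  have h12 : Bm c' + Bm c = Bm (c + c') := by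
    ext i j; simp only [Matrix.add_apply, Bm, Matrix.of_apply, Pi.add_apply]
    split <;> simp [add_comm]
  have h21 : Cm c + Cm c' = Cm (c + c') := by
    ext i j; simp only [Matrix.add_apply, Cm, Matrix.of_apply, Pi.add_apply]
    split <;> simp <;> ring
  rw [h11, h12, h21]

lemma Rm_mul (D D' : Matrix (Fin m) (Fin m) ℝ) : Rm D * Rm D' = Rm (D * D') := by
  unfold Rm; rw [fromBlocks_multiply]; simp

lemma Tm_zero : Tm (0 : Fin m → ℝ) = 1 := by
  unfold Tm
  have h1 : Amat (-((0 : Fin m → ℝ) ⬝ᵥ 0)/2) = 1 := by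
    ext i j; fin_cases i <;> fin_cases j <;> simp [Amat, Matrix.one_apply]
  have h2 : Bm (0 : Fin m → ℝ) = 0 := by ext i j; simp [Bm]
  have h3 : Cm (0 : Fin m → ℝ) = 0 := by ext i j; simp [Cm]
  rw [h1, h2, h3, fromBlocks_one]

lemma Rm_one : Rm (1 : Matrix (Fin m) (Fin m) ℝ) = 1 := fromBlocks_one

lemma vecMul_orth (D : Matrix (Fin m) (Fin m) ℝ) (hD : Dᵀ * D = 1) (c : Fin m → ℝ) :
    (D *ᵥ c) ᵥ* D = c := by
  rw [vecMul_mulVec, hD, vecMul_one]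

lemma Rm_Tm (D : Matrix (Fin m) (Fin m) ℝ) (hD : Dᵀ * D = 1) (c : Fin m → ℝ) :
    Rm D * Tm c = Tm (D *ᵥ c) * Rm D := by
  unfold Rm Tm
  rw [fromBlocks_multiply, fromBlocks_multiply]
  simp only [Matrix.mul_one, Matrix.one_mul, Matrix.mul_zero, Matrix.zero_mul, add_zero,
    zero_add]
  have hdot : (D *ᵥ c) ⬝ᵥ (D *ᵥ c) = c ⬝ᵥ c := by
    rw [dotProduct_mulVec, vecMul_orth D hD]
  have hB : Bm (D *ᵥ c) * D = Bm c := by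
    ext i j
    fin_cases i
    · have := congrFun (vecMul_orth D hD c) j
      simpa [Bm, Matrix.mul_apply, vecMul, dotProduct] using this
    · simp [Bm, Matrix.mul_apply]
  have hC : D * Cm c = Cm (D *ᵥ c) := by
    ext i j
    fin_cases j <;> simp [Cm, Matrix.mul_apply, mulVec, dotProduct, mul_neg,
      Finset.sum_neg_distrib]
  rw [hdot, hB, hC]

lemma Tm_J (c : Fin m → ℝ) : (Tm c)ᵀ * Jmat m * Tm c = Jmat m := by
  unfold Tm Jmat
  rw [fromBlocks_transpose, Matrix.transpose_one, fromBlocks_multiply, fromBlocks_multiply]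
  refine fromBlocks_inj.mpr ⟨?_, ?_, ?_, ?_⟩
  · ext i j
    fin_cases i <;> fin_cases j <;>
      simp [Amat, Bm, Cm, Kmat, Matrix.mul_apply, Fin.sum_univ_two, dotProduct,
        Finset.sum_add_distrib] <;> ring_nf
  · ext i j
    fin_cases i <;>
      simp [Amat, Bm, Cm, Kmat, Matrix.mul_apply, Fin.sum_univ_two]
  · ext i j
    fin_cases j <;>
      simp [Amat, Bm, Cm, Kmat, Matrix.mul_apply, Fin.sum_univ_two]
  · ext i j
    simp [Bm, Kmat, Matrix.mul_apply, Fin.sum_univ_two, Matrix.one_apply]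

lemma Rm_J (D : Matrix (Fin m) (Fin m) ℝ) (hD : Dᵀ * D = 1) :
    (Rm D)ᵀ * Jmat m * Rm D = Jmat m := by
  unfold Rm Jmat
  rw [fromBlocks_transpose, fromBlocks_multiply, fromBlocks_multiply]
  simp [hD]

lemma det_Tm (c : Fin m → ℝ) : (Tm c).det = 1 := by
  unfold Tm
  rw [Matrix.det_fromBlocks_one₂₂, Bm_mul_Cm]
  rw [Matrix.det_fin_two]
  simp [Amat]

lemma det_Rm (D : Matrix (Fin m) (Fin m) ℝ) : (Rm D).det = D.det := by
  unfold Rm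
  rw [Matrix.det_fromBlocks_zero₂₁]
  simp

lemma Tm_col (c : Fin m → ℝ) (i : Fin 2 ⊕ Fin m) :
    Tm c i (Sum.inl 0) = if i = Sum.inl 0 then 1 else 0 := by
  rcases i with a | a
  · fin_cases a <;> simp [Tm, Amat]
  · simp [Tm, Cm]

lemma Rm_col (D : Matrix (Fin m) (Fin m) ℝ) (i : Fin 2 ⊕ Fin m) :
    Rm D i (Sum.inl 0) = if i = Sum.inl 0 then 1 else 0 := by
  rcases i with a | a
  · fin_cases a <;> simp [Rm, Matrix.one_apply]
  · simp [Rm]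

lemma exists_of_pred (M : Matrix (Fin 2 ⊕ Fin m) (Fin 2 ⊕ Fin m) ℝ)
    (hJ : Mᵀ * Jmat m * M = Jmat m) (hdet : M.det = 1)
    (hcol : ∀ i, M i (Sum.inl 0) = if i = Sum.inl 0 then 1 else 0) :
    ∃ c D, Dᵀ * D = 1 ∧ D.det = 1 ∧ M = Tm c * Rm D := by
  set A := M.toBlocks₁₁ with hA
  set B := M.toBlocks₁₂ with hB
  set C := M.toBlocks₂₁ with hC
  set D := M.toBlocks₂₂ with hD
  have hM : M = fromBlocks A B C D := (fromBlocks_toBlocks M).symm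
  rw [hM] at hJ
  rw [fromBlocks_transpose] at hJ
  unfold Jmat at hJ
  rw [fromBlocks_multiply, fromBlocks_multiply] at hJ
  obtain ⟨e11, e12, e21, e22⟩ := fromBlocks_inj.mp hJ
  simp only [Matrix.mul_zero, Matrix.zero_mul, Matrix.mul_one, Matrix.one_mul, add_zero,
    zero_add] at e11 e12 e21 e22
  clear hJ
  have hA00 : A 0 0 = 1 := by
    rw [hA]; simpa [Matrix.toBlocks₁₁] using hcol (Sum.inl 0)
  have hA10 : A 1 0 = 0 := by
    rw [hA]; simpa [Matrix.toBlocks₁₁] using hcol (Sum.inl 1)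
  have hC0 : ∀ i, C i 0 = 0 := by
    intro i
    rw [hC]; simpa [Matrix.toBlocks₂₁] using hcol (Sum.inr i)
  set c : Fin m → ℝ := fun i => -C i 1 with hc
  have hA11 : A 1 1 = 1 := by
    have h := Matrix.ext_iff.mpr e11 0 1
    simp [Kmat, Matrix.mul_apply, Fin.sum_univ_two, hA00, hA10, hC0] at h
    exact h
  have hA01 : A 0 1 = -(c ⬝ᵥ c)/2 := by
    have h := Matrix.ext_iff.mpr e11 1 1
    simp [Kmat, Matrix.mul_apply, Fin.sum_univ_two, hA00, hA10, hA11, hC0] at h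
    simp only [hc, dotProduct, neg_mul_neg]
    linarith
  have hB1 : ∀ j, B 1 j = 0 := by
    intro j
    have h := Matrix.ext_iff.mpr e12 0 j
    simp [Kmat, Matrix.mul_apply, Fin.sum_univ_two, hA00, hA10, hC0] at h
    exact h
  have hB0 : ∀ j, B 0 j = ∑ i, c i * D i j := by
    intro j
    have h := Matrix.ext_iff.mpr e12 1 j
    simp [Kmat, Matrix.mul_apply, Fin.sum_univ_two, hA00, hA10, hA11, hC0, hB1] at h
    simp only [hc, neg_mul]
    rw [Finset.sum_neg_distrib]
    linarith
  have hDD : Dᵀ * D = 1 := by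
    ext i j
    have h := Matrix.ext_iff.mpr e22 i j
    simp only [Kmat, Matrix.add_apply, Matrix.mul_apply, Matrix.transpose_apply,
      Fin.sum_univ_two, Matrix.of_apply] at h
    simp only [hB1, mul_zero, zero_mul, add_zero, zero_add, mul_one] at h
    simp only [Matrix.mul_apply, Matrix.transpose_apply]
    simpa using h
  have hMeq : M = Tm c * Rm D := by
    have hTR : Tm c * Rm D = fromBlocks (Amat (-(c ⬝ᵥ c)/2)) (Bm c * D) (Cm c) D := by
      unfold Tm Rm
      rw [fromBlocks_multiply]
      simp
    rw [hTR, hM]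
    refine fromBlocks_inj.mpr ⟨?_, ?_, ?_, rfl⟩
    · ext i j
      fin_cases i <;> fin_cases j <;> simp [Amat, hA00, hA01, hA10, hA11]
    · ext i j
      fin_cases i <;> simp [Bm, Matrix.mul_apply, hB0, hB1]
    · ext i j
      fin_cases j <;> simp [Cm, hc, hC0]
  have hdetD : D.det = 1 := by
    rw [hMeq, Matrix.det_mul, det_Tm, det_Rm, one_mul] at hdet
    exact hdet
  exact ⟨c, D, hDD, hdetD, hMeq⟩

lemma Tm_Rm_blocks (c : Fin m → ℝ) (D : Matrix (Fin m) (Fin m) ℝ) :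
    Tm c * Rm D = fromBlocks (Amat (-(c ⬝ᵥ c)/2)) (Bm c * D) (Cm c) D := by
  unfold Tm Rm
  rw [fromBlocks_multiply]
  simp

lemma Tm_Rm_eq_one (c : Fin m → ℝ) (D : Matrix (Fin m) (Fin m) ℝ)
    (h : Tm c * Rm D = 1) : c = 0 ∧ D = 1 := by
  rw [Tm_Rm_blocks] at h
  rw [show (1 : Matrix (Fin 2 ⊕ Fin m) (Fin 2 ⊕ Fin m) ℝ) = fromBlocks 1 0 0 1
    from fromBlocks_one.symm] at h
  obtain ⟨h11, h12, h21, h22⟩ := fromBlocks_inj.mp h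
  constructor
  · funext i
    have := Matrix.ext_iff.mpr h21 i 1
    simpa [Cm, neg_eq_zero] using this
  · exact h22

lemma Rm_Tm_Rm (X Y : Matrix (Fin m) (Fin m) ℝ) (hX : Xᵀ * X = 1) (hXY : X * Y = 1)
    (c : Fin m → ℝ) : Rm X * Tm c * Rm Y = Tm (X *ᵥ c) := by
  rw [Rm_Tm X hX, mul_assoc, Rm_mul, hXY, Rm_one, mul_one]

noncomputable def TmUnit (c : Fin m → ℝ) : GL (Fin 2 ⊕ Fin m) ℝ :=
  ⟨Tm c, Tm (-c),
    by rw [Tm_mul, add_neg_cancel, Tm_zero],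
    by rw [Tm_mul, neg_add_cancel, Tm_zero]⟩

noncomputable def TmHom : Multiplicative (Fin m → ℝ) →* GL (Fin 2 ⊕ Fin m) ℝ where
  toFun v := TmUnit v.toAdd
  map_one' := by
    apply Units.ext
    show Tm (0 : Fin m → ℝ) = 1
    exact Tm_zero
  map_mul' v w := by
    apply Units.ext
    show Tm (v.toAdd + w.toAdd) = Tm v.toAdd * Tm w.toAdd
    rw [Tm_mul]

noncomputable def RmUnit (O : GL (Fin m) ℝ) : GL (Fin 2 ⊕ Fin m) ℝ :=
  ⟨Rm ↑O, Rm ↑(O⁻¹),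
    by rw [Rm_mul, ← Units.val_mul, mul_inv_cancel, Units.val_one, Rm_one],
    by rw [Rm_mul, ← Units.val_mul, inv_mul_cancel, Units.val_one, Rm_one]⟩

noncomputable def RmHom : GL (Fin m) ℝ →* GL (Fin 2 ⊕ Fin m) ℝ where
  toFun := RmUnit
  map_one' := by
    apply Units.ext
    show Rm ((1 : GL (Fin m) ℝ) : Matrix (Fin m) (Fin m) ℝ) = 1
    rw [Units.val_one, Rm_one]
  map_mul' O O' := by
    apply Units.ext
    show Rm ((O * O' : GL (Fin m) ℝ) : Matrix (Fin m) (Fin m) ℝ) = Rm ↑O * Rm ↑O'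
    rw [Units.val_mul, Rm_mul]

/-- The stabilizer predicate on matrices over the split index type. -/
def Pm (M : Matrix (Fin 2 ⊕ Fin m) (Fin 2 ⊕ Fin m) ℝ) : Prop :=
  Mᵀ * Jmat m * M = Jmat m ∧ M.det = 1 ∧
    ∀ i, M i (Sum.inl 0) = if i = Sum.inl 0 then 1 else 0

lemma Pm_mul {X Y : Matrix (Fin 2 ⊕ Fin m) (Fin 2 ⊕ Fin m) ℝ} (hX : Pm X) (hY : Pm Y) :
    Pm (X * Y) := by
  obtain ⟨hX1, hX2, hX3⟩ := hX
  obtain ⟨hY1, hY2, hY3⟩ := hY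
  refine ⟨?_, ?_, ?_⟩
  · rw [Matrix.transpose_mul]
    calc Yᵀ * Xᵀ * (Jmat m) * (X * Y) = Yᵀ * (Xᵀ * Jmat m * X) * Y := by
          simp only [Matrix.mul_assoc]
    _ = Jmat m := by rw [hX1, hY1]
  · rw [Matrix.det_mul, hX2, hY2, one_mul]
  · intro i
    rw [Matrix.mul_apply]
    calc ∑ k, X i k * Y k (Sum.inl 0) = ∑ k, X i k * if k = Sum.inl 0 then 1 else 0 := by
          simp_rw [hY3]
    _ = X i (Sum.inl 0) := by simp
    _ = _ := hX3 i

lemma Pm_Tm (c : Fin m → ℝ) : Pm (Tm c) := ⟨Tm_J c, det_Tm c, Tm_col c⟩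

lemma Pm_Rm (D : Matrix (Fin m) (Fin m) ℝ) (hD : Dᵀ * D = 1) (hdet : D.det = 1) :
    Pm (Rm D) := ⟨Rm_J D hD, by rw [det_Rm, hdet], Rm_col D⟩

lemma mink_mulVec (x : Fin (m+2) → ℝ) :
    minkMat (m+2) *ᵥ x = Fin.cons (-(x 0)) (Fin.tail x) := by
  funext i
  rw [minkMat, Matrix.mulVec_diagonal]
  refine Fin.cases ?_ (fun j => ?_) i <;> simp [Fin.tail]

lemma mink_dot (a b : ℝ) (v w : Fin (m+1) → ℝ) :
    (Fin.cons a v) ⬝ᵥ (minkMat (m+2) *ᵥ Fin.cons b w) = -(a*b) + v ⬝ᵥ w := by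
  rw [mink_mulVec]
  simp [dotProduct, Fin.sum_univ_succ, Fin.tail]
  try ring

lemma exists_gram (m : ℕ) (l : Fin (m+2) → ℝ) (hl : l ≠ 0)
    (hnull : l ⬝ᵥ (minkMat (m+2) *ᵥ l) = 0) :
    ∃ col : Fin 2 ⊕ Fin m → Fin (m+2) → ℝ,
      col (Sum.inl 0) = l ∧
      ∀ x y, (col x) ⬝ᵥ (minkMat (m+2) *ᵥ col y) = Jmat m x y := by
  set lv : Fin (m+1) → ℝ := Fin.tail l with hlvdef
  set l0 : ℝ := l 0 with hl0def
  have hl' : l = Fin.cons l0 lv := (Fin.cons_self_tail l).symm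
  have hlv : lv ⬝ᵥ lv = l0 * l0 := by
    rw [hl', mink_dot] at hnull
    linarith
  have hl0 : l0 ≠ 0 := by
    intro h
    apply hl
    have hlv0 : lv = 0 := by
      rw [← dotProduct_self_eq_zero (v := lv), hlv, h, mul_zero]
    rw [hl', hlv0, h]
    funext i
    refine Fin.cases ?_ (fun j => ?_) i <;> simp
  -- the euclidean space setup
  haveI : Fact (Module.finrank ℝ (EuclideanSpace ℝ (Fin (m+1))) = m + 1) :=
    ⟨finrank_euclideanSpace_fin⟩
  have hinner : ∀ x y : EuclideanSpace ℝ (Fin (m+1)),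
      ⟪x, y⟫ = (fun i => x i) ⬝ᵥ (fun i => y i) := by
    intro x y
    simp [PiLp.inner_apply, RCLike.inner_apply, dotProduct, starRingEnd_apply]
    exact Finset.sum_congr rfl fun i _ => mul_comm _ _
  set u : EuclideanSpace ℝ (Fin (m+1)) := WithLp.toLp 2 (fun i => |l0|⁻¹ * lv i) with hu
  have hu_inner : ⟪u, u⟫ = 1 := by
    have hd : (fun i => |l0|⁻¹ * lv i) ⬝ᵥ (fun i => |l0|⁻¹ * lv i)
        = |l0|⁻¹ * (|l0|⁻¹ * (lv ⬝ᵥ lv)) := by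
      simp [dotProduct, Finset.mul_sum]
      exact Finset.sum_congr rfl fun i _ => by ring
    have habs : |l0| ≠ 0 := abs_ne_zero.mpr hl0
    rw [hinner]
    show (fun i => |l0|⁻¹ * lv i) ⬝ᵥ (fun i => |l0|⁻¹ * lv i) = 1
    rw [hd, hlv, ← abs_mul_abs_self l0]
    field_simp
  have hu_ne : u ≠ 0 := by
    intro h
    rw [h, inner_zero_left] at hu_inner
    exact one_ne_zero hu_inner.symm
  set b := OrthonormalBasis.fromOrthogonalSpanSingleton (𝕜 := ℝ) m hu_ne with hb
  set eb : Fin m → Fin (m+1) → ℝ := fun j i => (b j : EuclideanSpace ℝ (Fin (m+1))) i with heb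
  have hlv_eb : ∀ j, lv ⬝ᵥ eb j = 0 := by
    intro j
    have hmem := (b j).2
    rw [Submodule.mem_orthogonal] at hmem
    have h0 := hmem u (Submodule.mem_span_singleton_self u)
    rw [hinner] at h0
    have : (fun i => u i) ⬝ᵥ (fun i => (b j : EuclideanSpace ℝ (Fin (m+1))) i)
        = |l0|⁻¹ * (lv ⬝ᵥ eb j) := by
      simp [hu, heb, dotProduct, Finset.mul_sum, mul_assoc]
    rw [this] at h0
    rcases mul_eq_zero.mp h0 with h | h
    · exact absurd h (by positivity)
    · exact h
  have heb_eb : ∀ i j, eb i ⬝ᵥ eb j = if i = j then 1 else 0 := by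
    intro i j
    have := orthonormal_iff_ite.mp b.orthonormal i j
    rw [Submodule.coe_inner] at this
    rw [← hinner]
    exact this
  -- the columns
  set kvec : Fin (m+2) → ℝ := Fin.cons (-(1/(2*l0))) (fun i => 1/(2*(l0*l0)) * lv i) with hkvec
  have hsmul_dot : ∀ (r : ℝ) (v w : Fin (m+1) → ℝ),
      (fun i => r * v i) ⬝ᵥ w = r * (v ⬝ᵥ w) := by
    intro r v w
    simp [dotProduct, Finset.mul_sum, mul_assoc]
  have hdot_smul : ∀ (r : ℝ) (v w : Fin (m+1) → ℝ),
      v ⬝ᵥ (fun i => r * w i) = r * (v ⬝ᵥ w) := by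
    intro r v w
    simp [dotProduct, Finset.mul_sum]
    exact Finset.sum_congr rfl fun i _ => by ring
  have h2 : ∀ a : Fin 2, a = 0 ∨ a = 1 := by decide
  refine ⟨Sum.elim ![l, kvec] (fun j => Fin.cons 0 (eb j)), by simp, ?_⟩
  have hll : l ⬝ᵥ minkMat (m+2) *ᵥ l = 0 := hnull
  have hlk : l ⬝ᵥ minkMat (m+2) *ᵥ kvec = 1 := by
    rw [hkvec, hl', mink_dot, hdot_smul, hlv]
    field_simp
    ring
  have hkl : kvec ⬝ᵥ minkMat (m+2) *ᵥ l = 1 := by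
    rw [hkvec, hl', mink_dot, hsmul_dot, hlv]
    field_simp
    ring
  have hkk : kvec ⬝ᵥ minkMat (m+2) *ᵥ kvec = 0 := by
    rw [hkvec, mink_dot, hsmul_dot, hdot_smul, hlv]
    field_simp
    ring
  have hle : ∀ j, l ⬝ᵥ minkMat (m+2) *ᵥ Fin.cons 0 (eb j) = 0 := by
    intro j
    rw [hl', mink_dot, hlv_eb]
    ring
  have hke : ∀ j, kvec ⬝ᵥ minkMat (m+2) *ᵥ Fin.cons 0 (eb j) = 0 := by
    intro j
    rw [hkvec, mink_dot, hsmul_dot, hlv_eb]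
    ring
  have hel : ∀ j, Fin.cons 0 (eb j) ⬝ᵥ minkMat (m+2) *ᵥ l = 0 := by
    intro j
    rw [hl', mink_dot, dotProduct_comm, hlv_eb]
    ring
  have hek : ∀ j, Fin.cons 0 (eb j) ⬝ᵥ minkMat (m+2) *ᵥ kvec = 0 := by
    intro j
    rw [hkvec, mink_dot, hdot_smul, dotProduct_comm, hlv_eb]
    ring
  have hee : ∀ i j, Fin.cons (0:ℝ) (eb i) ⬝ᵥ minkMat (m+2) *ᵥ Fin.cons 0 (eb j)
      = if i = j then 1 else 0 := by
    intro i j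
    rw [mink_dot, heb_eb]
    simp
  rintro (x | x) (y | y)
  · obtain rfl | rfl := h2 x <;> obtain rfl | rfl := h2 y <;>
      simp [Jmat, Kmat, hll, hlk, hkl, hkk]
  · obtain rfl | rfl := h2 x <;> simp [Jmat, hle, hke]
  · obtain rfl | rfl := h2 y <;> simp [Jmat, hel, hek]
  · simp [Jmat, Matrix.one_apply, hee]

end LorentzAux

/-- The stabilizer `{A ∈ SO(n-1,1) : Aℓ = ℓ}` of a nonzero null vector `ℓ` in the Lorentz
group `SO(n-1,1) = {A : AᵀηA = η, det A = 1}` is isomorphic, as a group, to the semidirect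
product `ℝ^{n-2} ⋊ SO(n-2)` (the Euclidean group `ISO(n-2)`), where
`SO(n-2) = {O : OᵀO = 1, det O = 1}` acts on `ℝ^{n-2}` by its standard linear action. -/
theorem lorentz_null_stabilizer_iso_euclidean (n : ℕ) (hn : 3 ≤ n) (l : Fin n → ℝ)
    (hl : l ≠ 0) (hnull : dotProduct l ((minkMat n).mulVec l) = 0)
    (St : Subgroup (GL (Fin n) ℝ))
    (hSt : ∀ A : GL (Fin n) ℝ, A ∈ St ↔
      ((A : Matrix (Fin n) (Fin n) ℝ)ᵀ * minkMat n * (A : Matrix (Fin n) (Fin n) ℝ) = minkMat n ∧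
        (A : Matrix (Fin n) (Fin n) ℝ).det = 1 ∧
        (A : Matrix (Fin n) (Fin n) ℝ).mulVec l = l))
    (SOg : Subgroup (GL (Fin (n - 2)) ℝ))
    (hSOg : ∀ O : GL (Fin (n - 2)) ℝ, O ∈ SOg ↔
      ((O : Matrix (Fin (n - 2)) (Fin (n - 2)) ℝ)ᵀ * (O : Matrix (Fin (n - 2)) (Fin (n - 2)) ℝ) = 1 ∧
        (O : Matrix (Fin (n - 2)) (Fin (n - 2)) ℝ).det = 1)) :
    Nonempty (St ≃* (Multiplicative (Fin (n - 2) → ℝ)) ⋊[stdAction SOg] SOg) := by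
  classical
  obtain ⟨m, rfl⟩ : ∃ m, n = m + 2 := ⟨n - 2, by omega⟩
  clear hn
  obtain ⟨col, hcol0, hgram⟩ := LorentzAux.exists_gram m l hl hnull
  set ε : (Fin 2 ⊕ Fin m) ≃ Fin (m+2) := finSumFinEquiv.trans (finCongr (by omega)) with hε
  set Q : Matrix (Fin (m+2)) (Fin (m+2)) ℝ := Matrix.of fun i j => col (ε.symm j) i with hQ
  have hGram : Qᵀ * minkMat (m+2) * Q = (LorentzAux.Jmat m).submatrix ε.symm ε.symm := by
    ext a b
    rw [Matrix.mul_assoc, Matrix.mul_apply]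
    have hent : ∀ i, (minkMat (m+2) * Q) i b = (minkMat (m+2) *ᵥ col (ε.symm b)) i := by
      intro i
      rw [Matrix.mul_apply, Matrix.mulVec, dotProduct]
      rfl
    simp_rw [Matrix.transpose_apply, hent]
    exact hgram (ε.symm a) (ε.symm b)
  have hJdet : (LorentzAux.Jmat m).det = -1 := by
    unfold LorentzAux.Jmat
    rw [Matrix.det_fromBlocks_zero₂₁]
    simp [LorentzAux.Kmat, Matrix.det_fin_two]
  have hdetQ : IsUnit Q.det := by
    have hd := congrArg Matrix.det hGram
    rw [Matrix.det_mul, Matrix.det_mul, Matrix.det_transpose,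
      Matrix.det_submatrix_equiv_self, hJdet] at hd
    apply isUnit_iff_ne_zero.mpr
    intro h
    rw [h] at hd
    simp at hd
  have hQunit : IsUnit Q := (Matrix.isUnit_iff_isUnit_det Q).mpr hdetQ
  set P : GL (Fin (m+2)) ℝ := hQunit.unit with hP
  have hPval : (P : Matrix (Fin (m+2)) (Fin (m+2)) ℝ) = Q := hQunit.unit_spec
  set Qi : Matrix (Fin (m+2)) (Fin (m+2)) ℝ := (P⁻¹).val with hQi
  have hQQi : Q * Qi = 1 := by
    rw [hQi, ← hPval, ← Units.val_mul, mul_inv_cancel, Units.val_one]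
  have hQiQ : Qi * Q = 1 := by
    rw [hQi, ← hPval, ← Units.val_mul, inv_mul_cancel, Units.val_one]
  -- the group isomorphism `GL (Fin (m+2)) ℝ ≃* GL (Fin 2 ⊕ Fin m) ℝ`
  set Φ : GL (Fin (m+2)) ℝ ≃* GL (Fin 2 ⊕ Fin m) ℝ :=
    (MulAut.conj P⁻¹).trans
      (Units.mapEquiv (Matrix.reindexAlgEquiv ℝ ℝ ε.symm).toMulEquiv) with hΦ
  have hΦval : ∀ A : GL (Fin (m+2)) ℝ,
      (Φ A).val = (Qi * A.val * Q).submatrix ε ε := by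
    intro A
    show (Matrix.reindexAlgEquiv ℝ ℝ ε.symm) ((P⁻¹ * A * (P⁻¹)⁻¹).val)
        = (Qi * A.val * Q).submatrix ε ε
    rw [inv_inv]
    rw [Matrix.reindexAlgEquiv_apply]
    rw [Units.val_mul, Units.val_mul]
    rw [hPval]
    rfl
  -- transfer of the three defining conditions across Φ
  have hJ2 : LorentzAux.Jmat m = (Qᵀ * minkMat (m+2) * Q).submatrix ε ε := by
    rw [hGram, Matrix.submatrix_submatrix, Equiv.symm_comp_self, Matrix.submatrix_id_id]
  have hsubinj : ∀ Y Z : Matrix (Fin (m+2)) (Fin (m+2)) ℝ,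
      Y.submatrix ε ε = Z.submatrix ε ε → Y = Z := by
    intro Y Z h
    have := congrArg (fun W => W.submatrix ε.symm ε.symm) h
    simpa [Matrix.submatrix_submatrix, Equiv.self_comp_symm, Matrix.submatrix_id_id] using this
  have hTcancel : ∀ Y : Matrix (Fin (m+2)) (Fin (m+2)) ℝ, Qiᵀ * (Qᵀ * Y * Q) * Qi = Y := by
    intro Y
    have h1 : Qiᵀ * Qᵀ = 1 := by rw [← Matrix.transpose_mul, hQQi, Matrix.transpose_one]
    calc Qiᵀ * (Qᵀ * Y * Q) * Qi = (Qiᵀ * Qᵀ) * Y * (Q * Qi) := by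
          simp only [Matrix.mul_assoc]
    _ = Y := by rw [h1, hQQi, Matrix.one_mul, Matrix.mul_one]
  have hQcancel : ∀ Y Z : Matrix (Fin (m+2)) (Fin (m+2)) ℝ,
      Qᵀ * Y * Q = Qᵀ * Z * Q → Y = Z := by
    intro Y Z h
    have := congrArg (fun W => Qiᵀ * W * Qi) h
    simpa [hTcancel] using this
  set e0 : Fin (m+2) := ε (Sum.inl 0) with he0
  set δ : Fin (m+2) → ℝ := fun j => if j = e0 then 1 else 0 with hδ
  have hcole0 : ∀ i, Q i e0 = l i := by
    intro i
    show col (ε.symm (ε (Sum.inl 0))) i = l i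
    rw [Equiv.symm_apply_apply, hcol0]
  have hQδ : Q *ᵥ δ = l := by
    funext i
    rw [Matrix.mulVec, dotProduct]
    simp only [hδ, mul_ite, mul_one, mul_zero, Finset.sum_ite_eq', Finset.mem_univ, if_true]
    exact hcole0 i
  have hkey : ∀ Y Z W : Matrix (Fin (m+2)) (Fin (m+2)) ℝ,
      (Qi * Y * Q)ᵀ * (Qᵀ * Z * Q) * (Qi * W * Q) = Qᵀ * (Yᵀ * Z * W) * Q := by
    intro Y Z W
    have h1 : Qiᵀ * Qᵀ = 1 := by rw [← Matrix.transpose_mul, hQQi, Matrix.transpose_one]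
    calc (Qi * Y * Q)ᵀ * (Qᵀ * Z * Q) * (Qi * W * Q)
        = Qᵀ * (Yᵀ * ((Qiᵀ * Qᵀ) * Z * (Q * Qi)) * W) * Q := by
          rw [Matrix.transpose_mul, Matrix.transpose_mul]
          simp only [Matrix.mul_assoc]
    _ = Qᵀ * (Yᵀ * Z * W) * Q := by
          rw [h1, hQQi, Matrix.one_mul, Matrix.mul_one]
  have hδcol : ∀ (Y : Matrix (Fin (m+2)) (Fin (m+2)) ℝ),
      (∀ i, Y.submatrix (ε : (Fin 2 ⊕ Fin m) → Fin (m+2)) ε i (Sum.inl 0)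
          = if i = Sum.inl 0 then 1 else 0)
        ↔ Y *ᵥ δ = δ := by
    intro Y
    constructor
    · intro h
      funext j
      rw [Matrix.mulVec, dotProduct]
      simp only [hδ, mul_ite, mul_one, mul_zero, Finset.sum_ite_eq', Finset.mem_univ, if_true]
      have := h (ε.symm j)
      rw [Matrix.submatrix_apply, Equiv.apply_symm_apply, ← he0] at this
      rw [this]
      by_cases hj : j = e0
      · subst hj
        simp [he0]
      · have h2 : ε.symm j ≠ Sum.inl 0 := by
          intro hc
          apply hj
          rw [he0, ← hc, Equiv.apply_symm_apply]
        simp [hj, h2]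
    · intro h i
      have := congrFun h (ε i)
      rw [Matrix.mulVec, dotProduct] at this
      simp only [hδ, mul_ite, mul_one, mul_zero, Finset.sum_ite_eq', Finset.mem_univ,
        if_true] at this
      rw [Matrix.submatrix_apply, ← he0, this]
      by_cases hi : i = Sum.inl 0
      · subst hi
        simp [he0]
      · have h2 : ε i ≠ e0 := fun hc => hi (ε.injective (by rw [he0] at hc; exact hc))
        simp [hi, h2]
  have htrans : ∀ A : GL (Fin (m+2)) ℝ,
      A ∈ St ↔ LorentzAux.Pm (Φ A).val := by
    intro A
    rw [hSt]
    unfold LorentzAux.Pm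
    rw [hΦval A]
    have hMT : (((Qi * A.val * Q).submatrix (ε : (Fin 2 ⊕ Fin m) → Fin (m+2)) ε)ᵀ)
        = ((Qi * A.val * Q)ᵀ).submatrix ε ε := Matrix.transpose_submatrix _ _ _
    have hmvl : ∀ (h : (Qi * A.val * Q) *ᵥ δ = δ), A.val *ᵥ l = l := by
      intro h
      have h' : Q *ᵥ ((Qi * A.val * Q) *ᵥ δ) = Q *ᵥ δ := by rw [h]
      rw [Matrix.mulVec_mulVec, hQδ,
        show Q * (Qi * A.val * Q) = (Q * Qi) * (A.val * Q) by simp only [Matrix.mul_assoc],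
        hQQi, Matrix.one_mul, ← Matrix.mulVec_mulVec, hQδ] at h'
      exact h'
    have hmvl' : ∀ (h : A.val *ᵥ l = l), (Qi * A.val * Q) *ᵥ δ = δ := by
      intro h
      rw [← Matrix.mulVec_mulVec, ← Matrix.mulVec_mulVec, hQδ, h, ← hQδ,
        Matrix.mulVec_mulVec, hQiQ, Matrix.one_mulVec]
    constructor
    · rintro ⟨h1, h2, h3⟩
      refine ⟨?_, ?_, ?_⟩
      · rw [hMT, hJ2, Matrix.submatrix_mul_equiv, Matrix.submatrix_mul_equiv]
        refine congrArg (fun W : Matrix (Fin (m+2)) (Fin (m+2)) ℝ =>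
          W.submatrix (ε : (Fin 2 ⊕ Fin m) → Fin (m+2)) ε) ?_
        rw [hkey, h1]
      · rw [Matrix.det_submatrix_equiv_self, Matrix.det_mul, Matrix.det_mul, h2, mul_one,
          ← Matrix.det_mul, hQiQ, Matrix.det_one]
      · exact (hδcol _).mpr (hmvl' h3)
    · rintro ⟨h1, h2, h3⟩
      refine ⟨?_, ?_, ?_⟩
      · rw [hMT, hJ2, Matrix.submatrix_mul_equiv, Matrix.submatrix_mul_equiv] at h1
        have h1' := hsubinj _ _ h1
        rw [hkey] at h1'
        exact hQcancel _ _ h1'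
      · rw [Matrix.det_submatrix_equiv_self, Matrix.det_mul, Matrix.det_mul] at h2
        have h4 : Qi.det * Q.det = 1 := by rw [← Matrix.det_mul, hQiQ, Matrix.det_one]
        have : Qi.det * A.val.det * Q.det = A.val.det * (Qi.det * Q.det) := by ring
        rw [this, h4, mul_one] at h2
        exact h2
      · exact hmvl ((hδcol _).mp h3)
  -- the semidirect product homomorphism
  set F₁ : Multiplicative (Fin m → ℝ) →* GL (Fin 2 ⊕ Fin m) ℝ := LorentzAux.TmHom with hF₁
  set F₂ : SOg →* GL (Fin 2 ⊕ Fin m) ℝ := LorentzAux.RmHom.comp SOg.subtype with hF₂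
  have hcompat : ∀ O : SOg,
      F₁.comp ((stdAction SOg O)).toMonoidHom = (MulAut.conj (F₂ O)).toMonoidHom.comp F₁ := by
    intro O
    obtain ⟨hO1, hO2⟩ := (hSOg O.val).mp O.2
    refine MonoidHom.ext fun v => ?_
    apply Units.ext
    show LorentzAux.Tm (O.val.val *ᵥ v.toAdd)
        = LorentzAux.Rm O.val.val * LorentzAux.Tm v.toAdd * LorentzAux.Rm (O.val⁻¹).val
    rw [LorentzAux.Rm_Tm_Rm _ _ hO1 (by rw [← Units.val_mul, mul_inv_cancel, Units.val_one])]
  set mu : (Multiplicative (Fin m → ℝ)) ⋊[stdAction SOg] SOg →* GL (Fin 2 ⊕ Fin m) ℝ :=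
    SemidirectProduct.lift F₁ F₂ hcompat with hmu
  have hmuval : ∀ g : (Multiplicative (Fin m → ℝ)) ⋊[stdAction SOg] SOg,
      ((mu g : GL (Fin 2 ⊕ Fin m) ℝ) : Matrix (Fin 2 ⊕ Fin m) (Fin 2 ⊕ Fin m) ℝ)
        = LorentzAux.Tm g.left.toAdd * LorentzAux.Rm (m := m) g.right.val.val := fun g => rfl
  have hPmmu : ∀ g, LorentzAux.Pm
      ((mu g : GL (Fin 2 ⊕ Fin m) ℝ) : Matrix (Fin 2 ⊕ Fin m) (Fin 2 ⊕ Fin m) ℝ) := by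
    intro g
    rw [hmuval]
    obtain ⟨hO1, hO2⟩ := (hSOg g.right.val).mp g.right.2
    exact LorentzAux.Pm_mul (LorentzAux.Pm_Tm _) (LorentzAux.Pm_Rm _ hO1 hO2)
  -- the homomorphism into the stabilizer
  have hmem : ∀ g, Φ.symm (mu g) ∈ St := by
    intro g
    rw [htrans]
    rw [MulEquiv.apply_symm_apply]
    exact hPmmu g
  set F : (Multiplicative (Fin m → ℝ)) ⋊[stdAction SOg] SOg →* St :=
    MonoidHom.mk' (fun g => ⟨Φ.symm (mu g), hmem g⟩)
      (by
        intro g g'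
        apply Subtype.ext
        show Φ.symm (mu (g * g')) = Φ.symm (mu g) * Φ.symm (mu g')
        rw [_root_.map_mul, _root_.map_mul]) with hF
  have hinj : Function.Injective F := by
    rw [injective_iff_map_eq_one]
    intro g hg
    have h1 : Φ.symm (mu g) = 1 := Subtype.ext_iff.mp hg
    have h2 : mu g = 1 := by
      have := congrArg Φ h1
      rwa [MulEquiv.apply_symm_apply, _root_.map_one] at this
    have h3 : LorentzAux.Tm g.left.toAdd * LorentzAux.Rm (m := m) g.right.val.val = 1 := by
      rw [← hmuval, h2, Units.val_one]
    obtain ⟨hc, hD⟩ := LorentzAux.Tm_Rm_eq_one _ _ h3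
    have hleft : g.left = 1 := by
      have : g.left.toAdd = 0 := hc
      exact this
    have hright : g.right = 1 := by
      apply Subtype.ext
      apply Units.ext
      simp [hD]
    calc g = SemidirectProduct.inl g.left * SemidirectProduct.inr g.right :=
          (SemidirectProduct.inl_left_mul_inr_right g).symm
    _ = 1 := by rw [hleft, hright, _root_.map_one, _root_.map_one, one_mul]
  have hsurj : Function.Surjective F := by
    rintro ⟨A, hA⟩
    have hPm := (htrans A).mp hA
    obtain ⟨hP1, hP2, hP3⟩ := hPm
    obtain ⟨c, D, hD1, hD2, hEq⟩ := LorentzAux.exists_of_pred _ hP1 hP2 hP3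
    have hDDt : D * Dᵀ = 1 := mul_eq_one_comm.mp hD1
    set O : GL (Fin m) ℝ := ⟨D, Dᵀ, hDDt, hD1⟩ with hO
    have hOmem : O ∈ SOg := (hSOg O).mpr ⟨hD1, hD2⟩
    refine ⟨SemidirectProduct.inl (Multiplicative.ofAdd c)
      * SemidirectProduct.inr ⟨O, hOmem⟩, ?_⟩
    apply Subtype.ext
    show Φ.symm (mu _) = A
    rw [MulEquiv.symm_apply_eq]
    apply Units.ext
    rw [_root_.map_mul, Units.val_mul, SemidirectProduct.lift_inl, SemidirectProduct.lift_inr]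
    show LorentzAux.Tm c * LorentzAux.Rm D = (Φ A).val
    exact hEq.symm
  exact ⟨(MulEquiv.ofBijective F ⟨hinj, hsurj⟩).symm⟩
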